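/- (Which of the two candidate strategies is optimal depends on the payoff structure and the number of arrival times.) Suppose u is uniform with values A > B > C. Then the all-office profile has strictly greater expected utility over the subgame T1 than the cut-off profile with cut-off N if and only if (N − kmin)·B > (N − 1 − kmin)·A + C. -/

import Mathlib

/-- The two actions: `c` (canteen) and `o` (office). -/
inductive Act : Type
  | c : Act
  | o : Act
deriving DecidableEq

open Act

/-- The set of arrival pairs
`T = {(k, k+1) : kmin ≤ k ≤ kmax - 1} ∪ {(k, k-1) : kmin + 1 ≤ k ≤ kmax}`. -/
noncomputable def T (kmin kmax : ℤ) : Finset (ℤ × ℤ) :=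
  ((Finset.Icc kmin (kmax - 1)).image (fun k => (k, k + 1))) ∪
  ((Finset.Icc (kmin + 1) kmax).image (fun k => (k, k - 1)))

/-- Subgame `T1 = {(t1,t2) ∈ T : t1 ≡ kmin (mod 2)}`. -/
noncomputable def T1 (kmin kmax : ℤ) : Finset (ℤ × ℤ) :=
  (T kmin kmax).filter (fun t => t.1 % 2 = kmin % 2)

/-- Subgame `T2 = {(t1,t2) ∈ T : t2 ≡ kmin (mod 2)}`. -/
noncomputable def T2 (kmin kmax : ℤ) : Finset (ℤ × ℤ) :=
  (T kmin kmax).filter (fun t => t.2 % 2 = kmin % 2)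

/-- The expected utility of profile `s` over a set `S` of arrival pairs:
`EU_S(s) = (1/|S|) · Σ_{(t1,t2) ∈ S} u_{(t1,t2)}(s_1(t1), s_2(t2))`. -/
noncomputable def EU (u : ℤ × ℤ → Act → Act → ℝ) (s : (ℤ → Act) × (ℤ → Act))
    (S : Finset (ℤ × ℤ)) : ℝ :=
  (∑ t ∈ S, u t (s.1 t.1) (s.2 t.2)) / S.card

/-- `s` is Pareto optimal over `S` if no profile `s'` has `EU_S(s') > EU_S(s)`. -/
def ParetoOptimal (u : ℤ × ℤ → Act → Act → ℝ) (S : Finset (ℤ × ℤ))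
    (s : (ℤ → Act) × (ℤ → Act)) : Prop :=
  ¬ ∃ s' : (ℤ → Act) × (ℤ → Act), EU u s' S > EU u s S

/-- `u` satisfies conditions (U1) and (U2) on the arrival pairs of `T`. -/
def SatisfiesU1U2 (kmin kmax N : ℤ) (u : ℤ × ℤ → Act → Act → ℝ) : Prop :=
  ∀ t ∈ T kmin kmax,
    (t.1 < N ∧ t.2 < N →
      u t c c > u t o o ∧ u t o o > u t c o ∧ u t c o = u t o c) ∧
    (N ≤ t.1 ∨ N ≤ t.2 →
      u t o o > u t c o ∧ u t c o = u t o c ∧ u t o c = u t c c)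

/-- `u` is uniform with values `A > B > C` (the order is assumed separately). -/
def Uniform (kmin kmax N : ℤ) (u : ℤ × ℤ → Act → Act → ℝ) (A B C : ℝ) : Prop :=
  ∀ t ∈ T kmin kmax,
    (t.1 < N ∧ t.2 < N →
      u t c c = A ∧ u t o o = B ∧ u t c o = C ∧ u t o c = C) ∧
    (N ≤ t.1 ∨ N ≤ t.2 →
      u t o o = B ∧ u t c c = C ∧ u t c o = C ∧ u t o c = C)

/-- The cut-off strategy with cut-off `m`: canteen iff arriving strictly before `m`. -/
def cutoff (m : ℤ) : ℤ → Act := fun k => if k < m then c else o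

/-- The all-office strategy. -/
def allOffice : ℤ → Act := fun _ => o

lemma T1_disj (kmin kmax : ℤ) : Disjoint
    (((Finset.Icc kmin (kmax-1)).filter (fun k => k % 2 = kmin % 2)).image (fun k => (k, k+1)))
    (((Finset.Icc (kmin+1) kmax).filter (fun k => k % 2 = kmin % 2)).image (fun k => (k, k-1))) := by
  rw [Finset.disjoint_left]
  rintro t ht1 ht2
  simp only [Finset.mem_image, Finset.mem_filter, Finset.mem_Icc] at ht1 ht2
  obtain ⟨k, _, rfl⟩ := ht1
  obtain ⟨j, _, hj⟩ := ht2
  have h1 := congrArg Prod.fst hj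
  have h2 := congrArg Prod.snd hj
  simp only [] at h1 h2
  omega

lemma up_inj : Function.Injective (fun k : ℤ => (k, k+1)) := by
  intro a b h; simpa using congrArg Prod.fst h

lemma down_inj : Function.Injective (fun k : ℤ => (k, k-1)) := by
  intro a b h; simpa using congrArg Prod.fst h

lemma T1_eq (kmin kmax : ℤ) :
    T1 kmin kmax =
      ((Finset.Icc kmin (kmax-1)).filter (fun k => k % 2 = kmin % 2)).image (fun k => (k, k+1)) ∪
      ((Finset.Icc (kmin+1) kmax).filter (fun k => k % 2 = kmin % 2)).image (fun k => (k, k-1)) := by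
  ext t
  simp only [T1, T, Finset.mem_filter, Finset.mem_union, Finset.mem_image, Finset.mem_Icc]
  constructor
  · rintro ⟨h | h, hp⟩
    · left; obtain ⟨k, hk, rfl⟩ := h; exact ⟨k, ⟨hk, hp⟩, rfl⟩
    · right; obtain ⟨k, hk, rfl⟩ := h; exact ⟨k, ⟨hk, hp⟩, rfl⟩
  · rintro (⟨k, ⟨hk, hp⟩, rfl⟩ | ⟨k, ⟨hk, hp⟩, rfl⟩)
    · exact ⟨Or.inl ⟨k, hk, rfl⟩, hp⟩
    · exact ⟨Or.inr ⟨k, hk, rfl⟩, hp⟩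

lemma sum_T1 (kmin kmax : ℤ) (f : ℤ × ℤ → ℝ) :
    ∑ t ∈ T1 kmin kmax, f t =
      (∑ k ∈ (Finset.Icc kmin (kmax-1)).filter (fun k => k % 2 = kmin % 2), f (k, k+1)) +
      (∑ k ∈ (Finset.Icc (kmin+1) kmax).filter (fun k => k % 2 = kmin % 2), f (k, k-1)) := by
  rw [T1_eq, Finset.sum_union (T1_disj kmin kmax),
    Finset.sum_image (fun a _ b _ h => up_inj h),
    Finset.sum_image (fun a _ b _ h => down_inj h)]

lemma card_T1 (kmin kmax : ℤ) :
    (T1 kmin kmax).card =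
      ((Finset.Icc kmin (kmax-1)).filter (fun k => k % 2 = kmin % 2)).card +
      ((Finset.Icc (kmin+1) kmax).filter (fun k => k % 2 = kmin % 2)).card := by
  rw [T1_eq, Finset.card_union_of_disjoint (T1_disj kmin kmax),
    Finset.card_image_of_injective _ up_inj,
    Finset.card_image_of_injective _ down_inj]


lemma shift_card (a b r : ℤ) :
    ((Finset.Icc a b).filter (fun k => k % 2 = r % 2)).card =
      ((Finset.Icc (a-1) (b-1)).filter (fun k => ¬ k % 2 = r % 2)).card := by
  apply Finset.card_nbij' (fun k => k - 1) (fun k => k + 1)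
  · intro x hx; simp only [Finset.mem_coe, Finset.mem_filter, Finset.mem_Icc] at hx ⊢; omega
  · intro x hx; simp only [Finset.mem_coe, Finset.mem_filter, Finset.mem_Icc] at hx ⊢; omega
  · intro x _; show x - 1 + 1 = x; omega
  · intro x _; show x + 1 - 1 = x; omega

lemma card_T1_eq (kmin kmax : ℤ) (h : kmin ≤ kmax) :
    (T1 kmin kmax).card = (kmax - kmin).toNat := by
  rw [card_T1]
  have hs := shift_card (kmin+1) kmax kmin
  rw [show kmin + 1 - 1 = kmin by ring] at hs
  rw [hs, Finset.card_filter_add_card_filter_not, Int.card_Icc]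
  omega

lemma tri_sum (s : Finset ℤ) (p q : ℤ → Prop) [DecidablePred p] [DecidablePred q]
    (vA vB vC : ℝ) :
    ∑ k ∈ s, (if p k then vA else if q k then vB else vC)
      = ((s.filter p).card : ℝ) * vA
        + (((s.filter fun k => ¬ p k).filter q).card : ℝ) * vB
        + (((s.filter fun k => ¬ p k).filter fun k => ¬ q k).card : ℝ) * vC := by
  have e1 : ∑ k ∈ s.filter p, (if p k then vA else if q k then vB else vC)
      = ((s.filter p).card : ℝ) * vA := by
    have h : ∀ k ∈ s.filter p, (if p k then vA else if q k then vB else vC) = vA :=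
      fun k hk => if_pos (Finset.mem_filter.1 hk).2
    rw [Finset.sum_congr rfl h, Finset.sum_const, nsmul_eq_mul]
  have e2 : ∑ k ∈ (s.filter fun k => ¬ p k).filter q,
        (if p k then vA else if q k then vB else vC)
      = (((s.filter fun k => ¬ p k).filter q).card : ℝ) * vB := by
    have h : ∀ k ∈ (s.filter fun k => ¬ p k).filter q,
        (if p k then vA else if q k then vB else vC) = vB := by
      intro k hk
      have h2 := Finset.mem_filter.1 hk
      have h3 := (Finset.mem_filter.1 h2.1).2
      rw [if_neg h3, if_pos h2.2]
    rw [Finset.sum_congr rfl h, Finset.sum_const, nsmul_eq_mul]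
  have e3 : ∑ k ∈ (s.filter fun k => ¬ p k).filter fun k => ¬ q k,
        (if p k then vA else if q k then vB else vC)
      = (((s.filter fun k => ¬ p k).filter fun k => ¬ q k).card : ℝ) * vC := by
    have h : ∀ k ∈ (s.filter fun k => ¬ p k).filter fun k => ¬ q k,
        (if p k then vA else if q k then vB else vC) = vC := by
      intro k hk
      have h2 := Finset.mem_filter.1 hk
      have h3 := (Finset.mem_filter.1 h2.1).2
      rw [if_neg h3, if_neg h2.2]
    rw [Finset.sum_congr rfl h, Finset.sum_const, nsmul_eq_mul]
  rw [← Finset.sum_filter_add_sum_filter_not s p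
      (fun k => if p k then vA else if q k then vB else vC),
    ← Finset.sum_filter_add_sum_filter_not (s.filter fun k => ¬ p k) q
      (fun k => if p k then vA else if q k then vB else vC),
    e1, e2, e3, add_assoc]

lemma key_sum (kmin kmax N : ℤ) (h1 : kmin < N) (h2 : N ≤ kmax) (vA vB vC : ℝ) :
    ∑ t ∈ T1 kmin kmax,
        (if t.1 < N ∧ t.2 < N then vA else if N ≤ t.1 ∧ N ≤ t.2 then vB else vC)
      = ((N - 1 - kmin).toNat : ℝ) * vA + ((kmax - N).toNat : ℝ) * vB + vC := by
  classical
  have simp1 : ∀ k : ℤ, (if k < N ∧ k + 1 < N then vA else if N ≤ k ∧ N ≤ k + 1 then vB else vC)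
      = (if k + 1 < N then vA else if N ≤ k then vB else vC) := by
    intro k
    by_cases hp : k + 1 < N
    · rw [if_pos (⟨by omega, hp⟩ : k < N ∧ k + 1 < N), if_pos hp]
    · rw [if_neg (by omega : ¬ (k < N ∧ k + 1 < N)), if_neg hp]
      by_cases hq : N ≤ k
      · rw [if_pos (⟨hq, by omega⟩ : N ≤ k ∧ N ≤ k + 1), if_pos hq]
      · rw [if_neg (by omega : ¬ (N ≤ k ∧ N ≤ k + 1)), if_neg hq]
  have simp2 : ∀ k : ℤ, (if k < N ∧ k - 1 < N then vA else if N ≤ k ∧ N ≤ k - 1 then vB else vC)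
      = (if k < N then vA else if N + 1 ≤ k then vB else vC) := by
    intro k
    by_cases hp : k < N
    · rw [if_pos (⟨hp, by omega⟩ : k < N ∧ k - 1 < N), if_pos hp]
    · rw [if_neg (by omega : ¬ (k < N ∧ k - 1 < N)), if_neg hp]
      by_cases hq : N + 1 ≤ k
      · rw [if_pos (⟨by omega, by omega⟩ : N ≤ k ∧ N ≤ k - 1), if_pos hq]
      · rw [if_neg (by omega : ¬ (N ≤ k ∧ N ≤ k - 1)), if_neg hq]
  rw [sum_T1 kmin kmax
    (fun t => if t.1 < N ∧ t.2 < N then vA else if N ≤ t.1 ∧ N ≤ t.2 then vB else vC)]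
  simp only
  rw [Finset.sum_congr rfl (fun k _ => simp1 k), Finset.sum_congr rfl (fun k _ => simp2 k),
    tri_sum _ (fun k => k + 1 < N) (fun k => N ≤ k) vA vB vC,
    tri_sum _ (fun k => k < N) (fun k => N + 1 ≤ k) vA vB vC]
  -- identify the six sets
  have cA1 : ((Finset.Icc kmin (kmax-1)).filter (fun k => k % 2 = kmin % 2)).filter
      (fun k => k + 1 < N) = (Finset.Icc kmin (N-2)).filter (fun k => k % 2 = kmin % 2) := by
    ext k; simp only [Finset.mem_filter, Finset.mem_Icc]; omega
  have cA2 : ((Finset.Icc (kmin+1) kmax).filter (fun k => k % 2 = kmin % 2)).filter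
      (fun k => k < N) = (Finset.Icc (kmin+1) (N-1)).filter (fun k => k % 2 = kmin % 2) := by
    ext k; simp only [Finset.mem_filter, Finset.mem_Icc]; omega
  have cB1 : (((Finset.Icc kmin (kmax-1)).filter (fun k => k % 2 = kmin % 2)).filter
      (fun k => ¬ k + 1 < N)).filter (fun k => N ≤ k)
      = (Finset.Icc N (kmax-1)).filter (fun k => k % 2 = kmin % 2) := by
    ext k; simp only [Finset.mem_filter, Finset.mem_Icc]
    omega
  have cB2 : (((Finset.Icc (kmin+1) kmax).filter (fun k => k % 2 = kmin % 2)).filter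
      (fun k => ¬ k < N)).filter (fun k => N + 1 ≤ k)
      = (Finset.Icc (N+1) kmax).filter (fun k => k % 2 = kmin % 2) := by
    ext k; simp only [Finset.mem_filter, Finset.mem_Icc]
    omega
  rw [cA1, cA2, cB1, cB2]
  -- the counts
  have nA : ((Finset.Icc kmin (N-2)).filter (fun k => k % 2 = kmin % 2)).card
      + ((Finset.Icc (kmin+1) (N-1)).filter (fun k => k % 2 = kmin % 2)).card
      = (N - 1 - kmin).toNat := by
    have hs := shift_card (kmin+1) (N-1) kmin
    rw [show kmin + 1 - 1 = kmin by ring, show N - 1 - 1 = N - 2 by ring] at hs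
    rw [hs, Finset.card_filter_add_card_filter_not, Int.card_Icc]
    omega
  have nB : ((Finset.Icc N (kmax-1)).filter (fun k => k % 2 = kmin % 2)).card
      + ((Finset.Icc (N+1) kmax).filter (fun k => k % 2 = kmin % 2)).card
      = (kmax - N).toNat := by
    have hs := shift_card (N+1) kmax kmin
    rw [show N + 1 - 1 = N by ring] at hs
    rw [hs, Finset.card_filter_add_card_filter_not, Int.card_Icc]
    omega
  have nC : ((((Finset.Icc kmin (kmax-1)).filter (fun k => k % 2 = kmin % 2)).filter
        (fun k => ¬ k + 1 < N)).filter (fun k => ¬ N ≤ k)).card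
      + ((((Finset.Icc (kmin+1) kmax).filter (fun k => k % 2 = kmin % 2)).filter
        (fun k => ¬ k < N)).filter (fun k => ¬ N + 1 ≤ k)).card = 1 := by
    by_cases hpar : (N - 1) % 2 = kmin % 2
    · have d1 : (((Finset.Icc kmin (kmax-1)).filter (fun k => k % 2 = kmin % 2)).filter
          (fun k => ¬ k + 1 < N)).filter (fun k => ¬ N ≤ k) = {N - 1} := by
        ext k
        simp only [Finset.mem_filter, Finset.mem_Icc, Finset.mem_singleton]
        omega
      have d2 : (((Finset.Icc (kmin+1) kmax).filter (fun k => k % 2 = kmin % 2)).filter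
          (fun k => ¬ k < N)).filter (fun k => ¬ N + 1 ≤ k) = ∅ := by
        ext k
        simp only [Finset.mem_filter, Finset.mem_Icc, Finset.notMem_empty, iff_false]
        omega
      rw [d1, d2]; simp
    · have d1 : (((Finset.Icc kmin (kmax-1)).filter (fun k => k % 2 = kmin % 2)).filter
          (fun k => ¬ k + 1 < N)).filter (fun k => ¬ N ≤ k) = ∅ := by
        ext k
        simp only [Finset.mem_filter, Finset.mem_Icc, Finset.notMem_empty, iff_false]
        omega
      have d2 : (((Finset.Icc (kmin+1) kmax).filter (fun k => k % 2 = kmin % 2)).filter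
          (fun k => ¬ k < N)).filter (fun k => ¬ N + 1 ≤ k) = {N} := by
        ext k
        simp only [Finset.mem_filter, Finset.mem_Icc, Finset.mem_singleton]
        omega
      rw [d1, d2]; simp
  have rA : ((((Finset.Icc kmin (N-2)).filter (fun k => k % 2 = kmin % 2)).card : ℝ)
      + (((Finset.Icc (kmin+1) (N-1)).filter (fun k => k % 2 = kmin % 2)).card : ℝ))
      = ((N - 1 - kmin).toNat : ℝ) := by exact_mod_cast nA
  have rB : ((((Finset.Icc N (kmax-1)).filter (fun k => k % 2 = kmin % 2)).card : ℝ)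
      + (((Finset.Icc (N+1) kmax).filter (fun k => k % 2 = kmin % 2)).card : ℝ))
      = ((kmax - N).toNat : ℝ) := by exact_mod_cast nB
  have rC : (((((Finset.Icc kmin (kmax-1)).filter (fun k => k % 2 = kmin % 2)).filter
        (fun k => ¬ k + 1 < N)).filter (fun k => ¬ N ≤ k)).card : ℝ)
      + (((((Finset.Icc (kmin+1) kmax).filter (fun k => k % 2 = kmin % 2)).filter
        (fun k => ¬ k < N)).filter (fun k => ¬ N + 1 ≤ k)).card : ℝ) = 1 := by
    exact_mod_cast nC
  linear_combination vA * rA + vB * rB + vC * rC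

/-- The all-office profile beats the cut-off profile with cut-off `N`
over `T1` iff `(N - kmin)·B > (N - 1 - kmin)·A + C`. -/
theorem stmt_11 (kmin kmax N : ℤ) (h1 : kmin < N) (h2 : N ≤ kmax)
    (A B C : ℝ) (hAB : A > B) (hBC : B > C)
    (u : ℤ × ℤ → Act → Act → ℝ) (hu : Uniform kmin kmax N u A B C) :
    EU u (allOffice, allOffice) (T1 kmin kmax) >
        EU u (cutoff N, cutoff N) (T1 kmin kmax) ↔
      ((N - kmin : ℤ) : ℝ) * B > ((N - 1 - kmin : ℤ) : ℝ) * A + C := by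
  classical
  have hT1T : ∀ t ∈ T1 kmin kmax, t ∈ T kmin kmax := fun t ht => Finset.mem_of_mem_filter t ht
  have hoo : ∀ t ∈ T kmin kmax, u t o o = B := by
    intro t ht
    by_cases h : t.1 < N ∧ t.2 < N
    · exact ((hu t ht).1 h).2.1
    · exact ((hu t ht).2 (by omega)).1
  have hval : ∀ t ∈ T kmin kmax, u t (cutoff N t.1) (cutoff N t.2) =
      if t.1 < N ∧ t.2 < N then A else if N ≤ t.1 ∧ N ≤ t.2 then B else C := by
    intro t ht
    simp only [cutoff]
    rcases lt_or_ge t.1 N with ht1 | ht1 <;> rcases lt_or_ge t.2 N with ht2 | ht2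
    · rw [if_pos ht1, if_pos ht2, if_pos ⟨ht1, ht2⟩]
      exact ((hu t ht).1 ⟨ht1, ht2⟩).1
    · rw [if_pos ht1, if_neg (not_lt.2 ht2), if_neg (by omega), if_neg (by omega)]
      exact ((hu t ht).2 (Or.inr ht2)).2.2.1
    · rw [if_neg (not_lt.2 ht1), if_pos ht2, if_neg (by omega), if_neg (by omega)]
      exact ((hu t ht).2 (Or.inl ht1)).2.2.2
    · rw [if_neg (not_lt.2 ht1), if_neg (not_lt.2 ht2), if_neg (by omega), if_pos ⟨ht1, ht2⟩]
      exact ((hu t ht).2 (Or.inl ht1)).1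
  have hsum_oo : ∑ t ∈ T1 kmin kmax, u t o o
      = ((N - 1 - kmin).toNat : ℝ) * B + ((kmax - N).toNat : ℝ) * B + B := by
    rw [Finset.sum_congr rfl (fun t ht => hoo t (hT1T t ht))]
    rw [show ∑ _t ∈ T1 kmin kmax, B = ∑ t ∈ T1 kmin kmax,
      (if t.1 < N ∧ t.2 < N then B else if N ≤ t.1 ∧ N ≤ t.2 then B else B) by simp]
    exact key_sum kmin kmax N h1 h2 B B B
  have hsum_cut : ∑ t ∈ T1 kmin kmax, u t (cutoff N t.1) (cutoff N t.2)
      = ((N - 1 - kmin).toNat : ℝ) * A + ((kmax - N).toNat : ℝ) * B + C := by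
    rw [Finset.sum_congr rfl (fun t ht => hval t (hT1T t ht))]
    exact key_sum kmin kmax N h1 h2 A B C
  have hpos : (0 : ℝ) < ((T1 kmin kmax).card : ℝ) := by
    rw [card_T1_eq kmin kmax (by omega)]
    exact_mod_cast (by omega : 0 < (kmax - kmin).toNat)
  have eoo : EU u (allOffice, allOffice) (T1 kmin kmax)
      = (((N - 1 - kmin).toNat : ℝ) * B + ((kmax - N).toNat : ℝ) * B + B)
        / ((T1 kmin kmax).card : ℝ) := by
    simp only [EU, allOffice]
    rw [hsum_oo]
  have ecut : EU u (cutoff N, cutoff N) (T1 kmin kmax)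
      = (((N - 1 - kmin).toNat : ℝ) * A + ((kmax - N).toNat : ℝ) * B + C)
        / ((T1 kmin kmax).card : ℝ) := by
    simp only [EU]
    rw [hsum_cut]
  rw [eoo, ecut, gt_iff_lt, div_lt_div_iff_of_pos_right hpos]
  have cA : ((N - 1 - kmin).toNat : ℝ) = (N : ℝ) - 1 - kmin := by
    have h := Int.toNat_of_nonneg (show (0:ℤ) ≤ N - 1 - kmin by omega)
    exact_mod_cast h
  rw [cA]
  push_cast
  constructor <;> intro h <;> nlinarith [h]
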